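/- arXiv:2311.01115 — 2 statements merged into one kernel-verified Lean document; each statement's English description precedes it below -/
import Mathlib

section
/- Let c be a generic linear list, f its piecewise linear map, and i an interior local minimum of c. Let s < c_i ≤ t be real numbers such that no item value other than c_i lies in the closed interval [s, t]. Then the number of connected components of f^{-1}((−∞, t]) equals the number of connected components of f^{-1}((−∞, s]) plus one. -/
/-- The piecewise linear map determined by the list `c` (on the domain `[1,m]`). -/
noncomputable def plMap (c : ℕ → ℝ) (x : ℝ) : ℝ :=
  c (Int.floor x).toNat +
    (x - (Int.floor x : ℝ)) * (c ((Int.floor x).toNat + 1) - c (Int.floor x).toNat)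

/-- The set of points of the domain `[1,m]` with values in `[A,B]`. -/
def levelBand (m : ℕ) (c : ℕ → ℝ) (A B : ℝ) : Set ℝ :=
  {x : ℝ | x ∈ Set.Icc (1 : ℝ) (m : ℝ) ∧ plMap c x ∈ Set.Icc A B}

/-- The sublevel set of the map at `s`, within the domain `[1,m]`. -/
def sublevel (m : ℕ) (c : ℕ → ℝ) (s : ℝ) : Set ℝ :=
  {x : ℝ | x ∈ Set.Icc (1 : ℝ) (m : ℝ) ∧ plMap c x ≤ s}

/-- The support of the frame spanned by the items `a` and `b`: the connected component
of `f⁻¹([f a, f b])` (within the domain) containing `a`. -/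
def frameSupport (m : ℕ) (c : ℕ → ℝ) (a b : ℕ) : Set ℝ :=
  connectedComponentIn (levelBand m c (c a) (c b)) (a : ℝ)

/-- `W(a,b)` is a triple-panel window of the piecewise linear map of `c`:
`a` and `b` are items with `c a < c b` lying in a common connected component `[x,y]`
of `f⁻¹([c a, c b])`, and the value at the end of the support away from the mirror
equals `c a`. -/
def IsTPW (m : ℕ) (c : ℕ → ℝ) (a b : ℕ) : Prop :=
  1 ≤ a ∧ a ≤ m ∧ 1 ≤ b ∧ b ≤ m ∧ c a < c b ∧
  (b : ℝ) ∈ frameSupport m c a b ∧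
  (if a < b then plMap c (sSup (frameSupport m c a b)) = c a
   else plMap c (sInf (frameSupport m c a b)) = c a)

/-- `i` is an interior local minimum of the list `c`. -/
def IsLocMin (m : ℕ) (c : ℕ → ℝ) (i : ℕ) : Prop :=
  1 < i ∧ i < m ∧ c i < c (i - 1) ∧ c i < c (i + 1)

/-- `i` is an interior local maximum of the list `c`. -/
def IsLocMax (m : ℕ) (c : ℕ → ℝ) (i : ℕ) : Prop :=
  1 < i ∧ i < m ∧ c (i - 1) < c i ∧ c (i + 1) < c i

/-- `i` is a critical item that is a leaf: an endpoint or an interior local minimum. -/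
def IsCritLeaf (m : ℕ) (c : ℕ → ℝ) (i : ℕ) : Prop :=
  i = 1 ∨ i = m ∨ IsLocMin m c i

/-- `i` is a critical item of the list `c`. -/
def IsCritItem (m : ℕ) (c : ℕ → ℝ) (i : ℕ) : Prop :=
  IsCritLeaf m c i ∨ IsLocMax m c i

/-- The set of connected components of `S`. -/
def componentsOf (S : Set ℝ) : Set (Set ℝ) :=
  {C | ∃ x ∈ S, C = connectedComponentIn S x}



lemma plMap_natCast (c : ℕ → ℝ) (n : ℕ) : plMap c (n : ℝ) = c n := by
  simp [plMap, Int.floor_natCast]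

lemma plMap_piece (c : ℕ → ℝ) (k : ℕ) {x : ℝ} (hx : x ∈ Set.Icc (k : ℝ) (k + 1)) :
    plMap c x = c k + (x - k) * (c (k + 1) - c k) := by
  obtain ⟨h1, h2⟩ := hx
  rcases eq_or_lt_of_le h2 with h | h
  · subst h
    rw [show ((k : ℝ) + 1) = ((k + 1 : ℕ) : ℝ) by push_cast; ring, plMap_natCast]
    push_cast
    ring
  · have hfl : ⌊x⌋ = (k : ℤ) := by
      rw [Int.floor_eq_iff]
      constructor <;> push_cast <;> [exact h1; exact h]
    rw [plMap, hfl]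
    simp

lemma plMap_mono (c : ℕ → ℝ) (k : ℕ) {x y : ℝ} (hx : x ∈ Set.Icc (k : ℝ) (k + 1))
    (hy : y ∈ Set.Icc (k : ℝ) (k + 1)) (hxy : x ≤ y) (hc : c k ≤ c (k + 1)) :
    plMap c x ≤ plMap c y := by
  rw [plMap_piece c k hx, plMap_piece c k hy]
  nlinarith

lemma plMap_anti (c : ℕ → ℝ) (k : ℕ) {x y : ℝ} (hx : x ∈ Set.Icc (k : ℝ) (k + 1))
    (hy : y ∈ Set.Icc (k : ℝ) (k + 1)) (hxy : x ≤ y) (hc : c (k + 1) ≤ c k) :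
    plMap c y ≤ plMap c x := by
  rw [plMap_piece c k hx, plMap_piece c k hy]
  nlinarith

lemma cc_eq (S : Set ℝ) {x : ℝ} (hx : x ∈ S) :
    connectedComponentIn S x = {y | Set.uIcc x y ⊆ S} := by
  apply Set.Subset.antisymm
  · intro y hy
    have hoc := (isPreconnected_connectedComponentIn (x := x) (F := S)).ordConnected
    exact (hoc.uIcc_subset (mem_connectedComponentIn hx) hy).trans
      (connectedComponentIn_subset S x)
  · have hoc : Set.OrdConnected {y | Set.uIcc x y ⊆ S} := by
      constructor
      intro y1 h1 y2 h2 z hz w hw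
      rw [Set.mem_uIcc] at hw
      rcases hw with ⟨hxw, hwz⟩ | ⟨hzw, hwx⟩
      · exact h2 (Set.mem_uIcc.mpr (Or.inl ⟨hxw, hwz.trans hz.2⟩))
      · exact h1 (Set.mem_uIcc.mpr (Or.inr ⟨hz.1.trans hzw, hwx⟩))
    apply hoc.isPreconnected.subset_connectedComponentIn
    · simp [Set.mem_setOf_eq, Set.uIcc_self, Set.singleton_subset_iff, hx]
    · intro y hy
      exact hy Set.right_mem_uIcc


lemma exists_anchor (m : ℕ) (c : ℕ → ℝ) (s' : ℝ) {x : ℝ} (hx : x ∈ sublevel m c s') :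
    ∃ k : ℕ, 1 ≤ k ∧ k ≤ m ∧ Set.uIcc (k : ℝ) x ⊆ sublevel m c s' := by
  obtain ⟨⟨hx1, hxm⟩, hfx⟩ := hx
  have hm1 : (1 : ℝ) ≤ m := hx1.trans hxm
  rcases eq_or_lt_of_le hxm with hxe | hxlt
  · refine ⟨m, by exact_mod_cast hm1, le_refl m, ?_⟩
    rw [hxe, Set.uIcc_self, Set.singleton_subset_iff]
    exact ⟨⟨hm1, le_refl _⟩, hxe ▸ hfx⟩
  · set k0 : ℕ := (Int.floor x).toNat with hk0def
    have hfl1 : (1 : ℤ) ≤ ⌊x⌋ := by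
      rw [Int.le_floor]; exact_mod_cast hx1
    have hcast : ((k0 : ℕ) : ℝ) = ((⌊x⌋ : ℤ) : ℝ) := by
      rw [hk0def]; exact_mod_cast congrArg Int.cast (Int.toNat_of_nonneg (by linarith))
    have hk0le : (k0 : ℝ) ≤ x := by rw [hcast]; exact Int.floor_le x
    have hk0lt : x < (k0 : ℝ) + 1 := by rw [hcast]; exact Int.lt_floor_add_one x
    have hk01 : 1 ≤ k0 := by
      have : (1 : ℤ) ≤ (k0 : ℤ) := by rw [hk0def, Int.toNat_of_nonneg (by linarith)]; exact hfl1
      exact_mod_cast this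
    have hk0m : k0 < m := by
      have : (k0 : ℝ) < m := lt_of_le_of_lt hk0le hxlt
      exact_mod_cast this
    rcases le_or_gt (c k0) (c (k0 + 1)) with hinc | hdec
    · refine ⟨k0, hk01, hk0m.le, ?_⟩
      rw [Set.uIcc_of_le hk0le]
      intro w ⟨hw1, hw2⟩
      refine ⟨⟨le_trans (by exact_mod_cast hk01) hw1, hw2.trans hxlt.le⟩, ?_⟩
      have := plMap_mono c k0 ⟨hw1, by linarith⟩ ⟨hk0le, hk0lt.le⟩ hw2 hinc
      linarith
    · refine ⟨k0 + 1, le_trans hk01 (Nat.le_succ k0), hk0m, ?_⟩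
      have hcast1 : ((k0 + 1 : ℕ) : ℝ) = (k0 : ℝ) + 1 := by push_cast; ring
      rw [Set.uIcc_of_ge (by rw [hcast1]; linarith)]
      intro w ⟨hw1, hw2⟩
      rw [hcast1] at hw2
      refine ⟨⟨hx1.trans hw1, le_trans hw2 (by exact_mod_cast hk0m)⟩, ?_⟩
      have := plMap_anti c k0 ⟨hk0le, hk0lt.le⟩ ⟨hk0le.trans hw1, hw2⟩ hw1 hdec.le
      linarith


lemma components_finite (m : ℕ) (c : ℕ → ℝ) (s' : ℝ) :
    (componentsOf (sublevel m c s')).Finite := by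
  apply Set.Finite.subset ((Set.finite_Icc 1 m).image
    (fun k : ℕ => connectedComponentIn (sublevel m c s') (k : ℝ)))
  rintro C ⟨x, hxS, rfl⟩
  obtain ⟨k, hk1, hkm, hsub⟩ := exists_anchor m c s' hxS
  refine ⟨k, ⟨hk1, hkm⟩, ?_⟩
  have hkC : (k : ℝ) ∈ connectedComponentIn (sublevel m c s') x := by
    rw [cc_eq _ hxS]
    rw [Set.uIcc_comm] at hsub
    exact hsub
  exact (connectedComponentIn_eq hkC).symm

lemma locmin_above (m : ℕ) (c : ℕ → ℝ) (i : ℕ) (hi1 : 1 < i) (him : i < m)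
    (hl : c i < c (i - 1)) (hr : c i < c (i + 1)) (s t : ℝ) (hs : s < c i)
    (hlt : t < c (i - 1)) (hrt : t < c (i + 1)) :
    ∀ y, Set.uIcc (i : ℝ) y ⊆ sublevel m c t → s < plMap c y := by
  intro y hy
  have hsub : ((i - 1 : ℕ) : ℝ) = (i : ℝ) - 1 := by
    rw [Nat.cast_sub hi1.le]; norm_num
  have hadd : i - 1 + 1 = i := Nat.sub_add_cancel hi1.le
  have hi1' : (1 : ℝ) < (i : ℝ) := by exact_mod_cast hi1
  have him' : (i : ℝ) < (m : ℝ) := by exact_mod_cast him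
  rcases le_total y (i : ℝ) with hyi | hiy
  · rw [Set.uIcc_of_ge hyi] at hy
    rcases le_or_gt ((i : ℝ) - 1) y with hcase | hcase
    · have key : plMap c (i : ℝ) ≤ plMap c y := by
        apply plMap_anti c (i - 1) (x := y) (y := (i : ℝ))
        · rw [hsub]; constructor <;> linarith
        · rw [hsub]; constructor <;> linarith
        · exact hyi
        · rw [hadd]; exact hl.le
      rw [plMap_natCast] at key; linarith
    · exfalso
      have hmem : ((i - 1 : ℕ) : ℝ) ∈ Set.Icc y (i : ℝ) := by
        rw [hsub]; constructor <;> linarith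
      have := (hy hmem).2
      rw [plMap_natCast] at this
      linarith
  · rw [Set.uIcc_of_le hiy] at hy
    rcases le_or_gt y ((i : ℝ) + 1) with hcase | hcase
    · have key : plMap c (i : ℝ) ≤ plMap c y := by
        apply plMap_mono c i (x := (i : ℝ)) (y := y)
        · constructor <;> linarith
        · constructor <;> linarith
        · exact hiy
        · exact hr.le
      rw [plMap_natCast] at key; linarith
    · exfalso
      have hmem : ((i + 1 : ℕ) : ℝ) ∈ Set.Icc (i : ℝ) y := by
        push_cast; constructor <;> linarith
      have := (hy hmem).2
      rw [plMap_natCast] at this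
      linarith

lemma separation (m : ℕ) (c : ℕ → ℝ) (i : ℕ) (hi1 : 1 < i) (him : i < m)
    (hl : c i < c (i - 1)) (hr : c i < c (i + 1)) (s t : ℝ) (hs : s < c i)
    (hlt : t < c (i - 1)) (hrt : t < c (i + 1))
    (hgap : ∀ k, 1 ≤ k → k ≤ m → k ≠ i → c k ∉ Set.Icc s t)
    {x1 x2 : ℝ} (hx1 : x1 ∈ sublevel m c s) (hx2 : x2 ∈ sublevel m c s)
    (h12 : x1 ≤ x2) (hT : Set.Icc x1 x2 ⊆ sublevel m c t) :
    Set.Icc x1 x2 ⊆ sublevel m c s := by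
  intro z hz
  obtain ⟨hz1, hz2⟩ := hz
  have hzIcc : z ∈ Set.Icc (1 : ℝ) (m : ℝ) := ⟨hx1.1.1.trans hz1, hz2.trans hx2.1.2⟩
  refine ⟨hzIcc, ?_⟩
  by_contra hzs
  push_neg at hzs
  have hzt : plMap c z ≤ t := (hT ⟨hz1, hz2⟩).2
  set k0 : ℕ := (Int.floor z).toNat with hk0def
  have hfl1 : (1 : ℤ) ≤ ⌊z⌋ := by rw [Int.le_floor]; exact_mod_cast hzIcc.1
  have hcast : ((k0 : ℕ) : ℝ) = ((⌊z⌋ : ℤ) : ℝ) := by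
    rw [hk0def]; exact_mod_cast congrArg Int.cast (Int.toNat_of_nonneg (by linarith))
  have hk0le : (k0 : ℝ) ≤ z := by rw [hcast]; exact Int.floor_le z
  have hk0lt : z < (k0 : ℝ) + 1 := by rw [hcast]; exact Int.lt_floor_add_one z
  have hk01 : 1 ≤ k0 := by
    have : (1 : ℤ) ≤ (k0 : ℤ) := by rw [hk0def, Int.toNat_of_nonneg (by linarith)]; exact hfl1
    exact_mod_cast this
  rcases le_or_gt (c k0) (c (k0 + 1)) with hinc | hdec
  · rcases le_or_gt x2 ((k0 : ℝ) + 1) with hcase | hcase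
    · have : plMap c z ≤ plMap c x2 :=
        plMap_mono c k0 ⟨hk0le, hk0lt.le⟩ ⟨hk0le.trans hz2, hcase⟩ hz2 hinc
      linarith [hx2.2]
    · have hmem : ((k0 + 1 : ℕ) : ℝ) ∈ Set.Icc x1 x2 := by
        push_cast; constructor <;> linarith
      have hct : c (k0 + 1) ≤ t := by
        have := (hT hmem).2; rwa [plMap_natCast] at this
      have hcs : s ≤ c (k0 + 1) := by
        have h1 : plMap c z ≤ plMap c ((k0 + 1 : ℕ) : ℝ) := by
          apply plMap_mono c k0 ⟨hk0le, hk0lt.le⟩ (by push_cast; constructor <;> linarith)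
            (by push_cast; linarith) hinc
        rw [plMap_natCast] at h1; linarith
      have hki : k0 + 1 = i := by
        by_contra hne
        have hkm : k0 + 1 ≤ m := by
          have : ((k0 : ℝ) + 1) ≤ (m : ℝ) := le_trans hcase.le hx2.1.2
          exact_mod_cast this
        exact hgap (k0 + 1) (by omega) hkm hne ⟨hcs, hct⟩
      -- x2 lies in the component of i in the t-sublevel, but plMap x2 ≤ s < plMap x2
      have : s < plMap c x2 := by
        apply locmin_above m c i hi1 him hl hr s t hs hlt hrt x2
        rw [Set.uIcc_of_le (by rw [← hki]; push_cast; linarith)]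
        intro w hw
        apply hT
        constructor
        · refine le_trans ?_ hw.1
          rw [← hki]; push_cast; linarith
        · exact hw.2
      linarith [hx2.2]
  · rcases le_or_gt ((k0 : ℝ)) x1 with hcase | hcase
    · have : plMap c z ≤ plMap c x1 :=
        plMap_anti c k0 ⟨hcase, by linarith⟩ ⟨hk0le, hk0lt.le⟩ hz1 hdec.le
      linarith [hx1.2]
    · have hmem : ((k0 : ℕ) : ℝ) ∈ Set.Icc x1 x2 := ⟨hcase.le, hk0le.trans hz2⟩
      have hct : c k0 ≤ t := by
        have := (hT hmem).2; rwa [plMap_natCast] at this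
      have hcs : s ≤ c k0 := by
        have h1 : plMap c z ≤ plMap c ((k0 : ℕ) : ℝ) := by
          apply plMap_anti c k0 (by constructor <;> linarith) ⟨hk0le, hk0lt.le⟩ hk0le hdec.le
        rw [plMap_natCast] at h1; linarith
      have hki : k0 = i := by
        by_contra hne
        have hkm : k0 ≤ m := by
          have : ((k0 : ℝ)) ≤ (m : ℝ) := le_trans hk0le hzIcc.2
          exact_mod_cast this
        exact hgap k0 hk01 hkm hne ⟨hcs, hct⟩
      have : s < plMap c x1 := by
        apply locmin_above m c i hi1 him hl hr s t hs hlt hrt x1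
        rw [Set.uIcc_of_ge (by rw [← hki]; linarith)]
        intro w hw
        apply hT
        constructor
        · exact hw.1
        · refine le_trans hw.2 ?_
          rw [← hki]; linarith
      linarith [hx1.2]

/-- Passing a value of an interior local minimum increases the number
of connected components of the sublevel set by one. -/
theorem statement13 (m : ℕ) (hm : 2 ≤ m) (c : ℕ → ℝ)
    (hgen : Set.InjOn c (Set.Icc 1 m))
    (i : ℕ) (hi : IsLocMin m c i)
    (s t : ℝ) (hs : s < c i) (ht : c i ≤ t)
    (hgap : ∀ k, 1 ≤ k → k ≤ m → k ≠ i → c k ∉ Set.Icc s t) :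
    (componentsOf (sublevel m c t)).ncard = (componentsOf (sublevel m c s)).ncard + 1 := by
  obtain ⟨hi1, him, hl, hr⟩ := hi
  have hlt : t < c (i - 1) := by
    have h := hgap (i - 1) (by omega) (by omega) (by omega)
    rw [Set.mem_Icc] at h
    push_neg at h
    exact h (by linarith)
  have hrt : t < c (i + 1) := by
    have h := hgap (i + 1) (by omega) (by omega) (by omega)
    rw [Set.mem_Icc] at h
    push_neg at h
    exact h (by linarith)
  set S := sublevel m c s with hSdef
  set T := sublevel m c t with hTdef
  have hst : s ≤ t := le_of_lt (lt_of_lt_of_le hs ht)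
  have hST : S ⊆ T := fun x hx => ⟨hx.1, hx.2.trans hst⟩
  have hiIcc : (i : ℝ) ∈ Set.Icc (1 : ℝ) (m : ℝ) :=
    ⟨by exact_mod_cast hi1.le, by exact_mod_cast him.le⟩
  have hiT : (i : ℝ) ∈ T := ⟨hiIcc, by rw [plMap_natCast]; exact ht⟩
  set Ci := connectedComponentIn T (i : ℝ) with hCidef
  have hCiS : ∀ y ∈ Ci, y ∉ S := by
    intro y hy hyS
    have hval : s < plMap c y := by
      apply locmin_above m c i hi1 him hl hr s t hs hlt hrt y
      rw [hCidef, cc_eq T hiT] at hy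
      exact hy
    exact absurd hyS.2 (by linarith)
  have hCiMem : Ci ∈ componentsOf T := ⟨(i : ℝ), hiT, rfl⟩
  have hB4 : ∀ x ∈ T, connectedComponentIn T x ≠ Ci →
      ∃ y, y ∈ S ∧ y ∈ connectedComponentIn T x := by
    intro x hxT hne
    obtain ⟨k, hk1, hkm, hsub⟩ := exists_anchor m c t hxT
    have hkCC : (k : ℝ) ∈ connectedComponentIn T x := by
      rw [cc_eq T hxT]
      rw [Set.uIcc_comm] at hsub
      exact hsub
    have hkT : (k : ℝ) ∈ T := hsub Set.left_mem_uIcc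
    have hkt : c k ≤ t := by have := hkT.2; rwa [plMap_natCast] at this
    rcases le_or_gt (c k) s with hks | hks
    · exact ⟨(k : ℝ), ⟨hkT.1, by rw [plMap_natCast]; exact hks⟩, hkCC⟩
    · have hki : k = i := by
        by_contra hne'
        exact hgap k hk1 hkm hne' ⟨hks.le, hkt⟩
      exact absurd ((connectedComponentIn_eq hkCC).trans (by rw [hki])) hne
  have hsep : ∀ y z : ℝ, y ∈ S → z ∈ S → Set.uIcc y z ⊆ T → Set.uIcc y z ⊆ S := by
    intro y z hy hz hT'
    rcases le_total y z with h | h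
    · rw [Set.uIcc_of_le h] at hT' ⊢
      exact separation m c i hi1 him hl hr s t hs hlt hrt hgap hy hz h hT'
    · rw [Set.uIcc_of_ge h] at hT' ⊢
      exact separation m c i hi1 him hl hr s t hs hlt hrt hgap hz hy h hT'
  have hCompInt : ∀ x, x ∈ T → ∀ y, y ∈ S → y ∈ connectedComponentIn T x →
      connectedComponentIn T x ∩ S = connectedComponentIn S y := by
    intro x hxT y hyS hyCC
    have hD : connectedComponentIn T x = connectedComponentIn T y :=
      connectedComponentIn_eq hyCC
    ext z
    constructor
    · rintro ⟨hzD, hzS⟩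
      have h1 : Set.uIcc y z ⊆ T :=
        ((isPreconnected_connectedComponentIn (x := x) (F := T)).ordConnected.uIcc_subset
          hyCC hzD).trans (connectedComponentIn_subset T x)
      have h2 := hsep y z hyS hzS h1
      rw [cc_eq S hyS]
      exact h2
    · intro hz
      rw [cc_eq S hyS] at hz
      have hzS : z ∈ S := hz Set.right_mem_uIcc
      have hzT : z ∈ connectedComponentIn T y := by
        rw [cc_eq T (hST hyS)]
        exact hz.trans hST
      exact ⟨by rw [hD]; exact hzT, hzS⟩
  have hbij : Set.BijOn (fun D => D ∩ S) (componentsOf T \ {Ci}) (componentsOf S) := by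
    refine ⟨?_, ?_, ?_⟩
    · rintro D ⟨⟨x, hxT, rfl⟩, hne⟩
      rw [Set.mem_singleton_iff] at hne
      obtain ⟨y, hyS, hyCC⟩ := hB4 x hxT hne
      exact ⟨y, hyS, hCompInt x hxT y hyS hyCC⟩
    · rintro D1 ⟨⟨x1, hx1T, rfl⟩, hne1⟩ D2 ⟨⟨x2, hx2T, rfl⟩, hne2⟩ heq
      rw [Set.mem_singleton_iff] at hne1 hne2
      obtain ⟨y, hyS, hyCC⟩ := hB4 x1 hx1T hne1
      simp only at heq
      have hy2 : y ∈ connectedComponentIn T x2 := by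
        have hmem : y ∈ connectedComponentIn T x1 ∩ S := ⟨hyCC, hyS⟩
        rw [heq] at hmem
        exact hmem.1
      rw [connectedComponentIn_eq hyCC, connectedComponentIn_eq hy2]
    · rintro C ⟨y, hyS, rfl⟩
      refine ⟨connectedComponentIn T y, ⟨⟨y, hST hyS, rfl⟩, ?_⟩, ?_⟩
      · rw [Set.mem_singleton_iff]
        intro hC
        exact hCiS y (by rw [← hC]; exact mem_connectedComponentIn (hST hyS)) hyS
      · exact hCompInt y (hST hyS) y hyS (mem_connectedComponentIn (hST hyS))
  have hfinT : (componentsOf T).Finite := components_finite m c t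
  have h1 : (componentsOf S).ncard = (componentsOf T \ {Ci}).ncard := by
    rw [← hbij.image_eq]
    exact Set.ncard_image_of_injOn hbij.injOn
  rw [← Set.ncard_diff_singleton_add_one hCiMem hfinT, h1]
end

section
/- Let c be a generic linear list with piecewise linear map f, and let p and q = p + 1 be neighboring interior items with p a local minimum and q a local maximum (so c_p < c_q), such that no item u ∉ {p, q} has value in the closed interval [c_p, c_q]. Then the connected component of f^{-1}([c_p, c_q]) containing p and q contains no integer item other than p and q, and is contained in the open interval (p − 1, q + 1). -/
lemma plMap_nat (c : ℕ → ℝ) (n : ℕ) : plMap c n = c n := by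
  simp [plMap]

lemma plMap_seg (c : ℕ → ℝ) (n : ℕ) (x : ℝ) (h1 : (n:ℝ) ≤ x) (h2 : x ≤ (n:ℝ) + 1) :
    plMap c x = c n + (x - n) * (c (n+1) - c n) := by
  rcases lt_or_eq_of_le h2 with h | h
  · have hf : ⌊x⌋ = (n:ℤ) := by
      rw [Int.floor_eq_iff]
      constructor
      · exact_mod_cast h1
      · push_cast; exact h
    simp [plMap, hf]
  · have : x = ((n+1 : ℕ) : ℝ) := by push_cast; linarith
    rw [this, plMap_nat]
    push_cast; ring

/-- For a contiguous neighboring local-minimum/local-maximum pair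
`p`, `q = p + 1`, the connected component of `f⁻¹([c p, c q])` containing `p` also
contains `q`, contains no integer item other than `p` and `q`, and is contained in the
open interval `(p - 1, q + 1)`. -/
theorem statement17 (m : ℕ) (hm : 2 ≤ m) (c : ℕ → ℝ)
    (hgen : Set.InjOn c (Set.Icc 1 m))
    (p q : ℕ) (hq : q = p + 1)
    (hmin : IsLocMin m c p) (hmax : IsLocMax m c q)
    (hcontig : ∀ u, 1 ≤ u → u ≤ m → u ≠ p → u ≠ q → c u ∉ Set.Icc (c p) (c q)) :
    (q : ℝ) ∈ frameSupport m c p q ∧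
    (∀ u : ℕ, 1 ≤ u → u ≤ m → (u : ℝ) ∈ frameSupport m c p q → u = p ∨ u = q) ∧
    frameSupport m c p q ⊆ Set.Ioo ((p : ℝ) - 1) ((q : ℝ) + 1) := by
  obtain ⟨hp1, hpm, hlm1, hlm2⟩ := hmin
  obtain ⟨hq1, hqm, hgm1, hgm2⟩ := hmax
  have hab : c p < c q := by rw [hq]; exact hlm2
  have hrcast : ((p - 1 : ℕ) : ℝ) = (p:ℝ) - 1 := by
    have h1 : (1:ℕ) ≤ p := by omega
    push_cast [Nat.cast_sub h1]; ring
  -- c (p-1) > c q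
  have hcrb : c q < c (p - 1) := by
    have h1 : c (p - 1) ∉ Set.Icc (c p) (c q) :=
      hcontig (p - 1) (by omega) (by omega) (by omega) (by omega)
    by_contra h
    exact h1 ⟨le_of_lt hlm1, not_lt.mp h⟩
  -- c (q+1) < c p
  have hcq1a : c (q + 1) < c p := by
    have h1 : c (q + 1) ∉ Set.Icc (c p) (c q) :=
      hcontig (q + 1) (by omega) (by omega) (by omega) (by omega)
    by_contra h
    exact h1 ⟨not_lt.mp h, le_of_lt hgm2⟩
  obtain ⟨d1, hd1⟩ : ∃ d : ℝ, d = c (p - 1) - c p := ⟨_, rfl⟩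
  obtain ⟨d2, hd2⟩ : ∃ d : ℝ, d = c q - c (q + 1) := ⟨_, rfl⟩
  have hd1pos : 0 < d1 := by rw [hd1]; linarith
  have hd2pos : 0 < d2 := by rw [hd2]; linarith
  obtain ⟨x0, hx0⟩ : ∃ x : ℝ, x = (p:ℝ) - (c q - c p)/d1 := ⟨_, rfl⟩
  obtain ⟨y0, hy0⟩ : ∃ y : ℝ, y = (q:ℝ) + (c q - c p)/d2 := ⟨_, rfl⟩
  have hdiv1 : (c q - c p)/d1 * d1 = c q - c p := div_mul_cancel₀ _ (ne_of_gt hd1pos)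
  have hdiv2 : (c q - c p)/d2 * d2 = c q - c p := div_mul_cancel₀ _ (ne_of_gt hd2pos)
  have hdiv1pos : 0 < (c q - c p)/d1 := div_pos (by linarith) hd1pos
  have hdiv2pos : 0 < (c q - c p)/d2 := div_pos (by linarith) hd2pos
  have hdiv1lt : (c q - c p)/d1 < 1 := (div_lt_one hd1pos).mpr (by rw [hd1]; linarith)
  have hdiv2lt : (c q - c p)/d2 < 1 := (div_lt_one hd2pos).mpr (by rw [hd2]; linarith)
  have hx0a : (p:ℝ) - 1 < x0 := by rw [hx0]; linarith
  have hx0b : x0 < p := by rw [hx0]; linarith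
  have hy0a : (q:ℝ) < y0 := by rw [hy0]; linarith
  have hy0b : y0 < (q:ℝ) + 1 := by rw [hy0]; linarith
  have hpq : (q:ℝ) = (p:ℝ) + 1 := by exact_mod_cast congrArg (Nat.cast : ℕ → ℝ) hq
  have hp2 : (2:ℝ) ≤ (p:ℝ) := by exact_mod_cast hp1
  have hqmR : (q:ℝ) + 1 ≤ (m:ℝ) := by
    have : q + 1 ≤ m := by omega
    exact_mod_cast this
  -- plMap values on the three segments
  have seg1 : ∀ x : ℝ, (p:ℝ) - 1 ≤ x → x ≤ p → plMap c x = c p + ((p:ℝ) - x) * d1 := by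
    intro x h1 h2
    have hps : p - 1 + 1 = p := by omega
    have := plMap_seg c (p - 1) x (by rw [hrcast]; exact h1) (by rw [hrcast]; linarith)
    rw [this, hps, hrcast, hd1]; ring
  have seg2 : ∀ x : ℝ, (p:ℝ) ≤ x → x ≤ q → plMap c x = c p + (x - (p:ℝ)) * (c q - c p) := by
    intro x h1 h2
    have := plMap_seg c p x h1 (by rw [hpq] at h2; exact h2)
    rw [this, ← hq]
  have seg3 : ∀ x : ℝ, (q:ℝ) ≤ x → x ≤ (q:ℝ) + 1 → plMap c x = c q - (x - (q:ℝ)) * d2 := by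
    intro x h1 h2
    have := plMap_seg c q x h1 h2
    rw [this, hd2]; ring
  -- the interval [x0, y0] is in the band
  have hband : Set.Icc x0 y0 ⊆ levelBand m c (c p) (c q) := by
    rintro x ⟨h1, h2⟩
    refine ⟨⟨by linarith, by linarith⟩, ?_⟩
    rcases le_total x p with hxp | hxp
    · rw [seg1 x (by linarith) hxp]
      constructor
      · have := mul_nonneg (show (0:ℝ) ≤ (p:ℝ) - x by linarith) hd1pos.le
        linarith
      · have := mul_le_mul_of_nonneg_right
          (show (p:ℝ) - x ≤ (c q - c p)/d1 by linarith) hd1pos.le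
        linarith
    · rcases le_total x q with hxq | hxq
      · rw [seg2 x hxp hxq]
        constructor
        · have := mul_nonneg (show (0:ℝ) ≤ x - (p:ℝ) by linarith)
            (show (0:ℝ) ≤ c q - c p by linarith)
          linarith
        · rw [hpq] at hxq
          have := mul_le_mul_of_nonneg_right (show x - (p:ℝ) ≤ 1 by linarith)
            (show (0:ℝ) ≤ c q - c p by linarith)
          rw [one_mul] at this
          linarith
      · rw [seg3 x hxq (by linarith)]
        constructor
        · have := mul_le_mul_of_nonneg_right
            (show x - (q:ℝ) ≤ (c q - c p)/d2 by linarith) hd2pos.le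
          linarith
        · have := mul_nonneg (show (0:ℝ) ≤ x - (q:ℝ) by linarith) hd2pos.le
          linarith
  have hpmem : (p:ℝ) ∈ Set.Icc x0 y0 := ⟨le_of_lt hx0b, by linarith⟩
  have hsub : Set.Icc x0 y0 ⊆ frameSupport m c p q :=
    isPreconnected_Icc.subset_connectedComponentIn hpmem hband
  have hpF : (p:ℝ) ∈ frameSupport m c p q := hsub hpmem
  -- frameSupport is contained in [x0, y0]
  have hFband : frameSupport m c p q ⊆ levelBand m c (c p) (c q) :=
    connectedComponentIn_subset _ _
  have hord : (frameSupport m c p q).OrdConnected :=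
    (isPreconnected_connectedComponentIn).ordConnected
  have hcomp : frameSupport m c p q ⊆ Set.Icc x0 y0 := by
    intro z hz
    by_contra hcon
    rw [Set.mem_Icc, not_and_or, not_le, not_le] at hcon
    rcases hcon with hzl | hzr
    · have hw1 : (p:ℝ) - 1 < max z (((p:ℝ) - 1 + x0)/2) :=
        lt_of_lt_of_le (by linarith) (le_max_right _ _)
      have hw2 : max z (((p:ℝ) - 1 + x0)/2) < x0 := max_lt hzl (by linarith)
      have hwF : max z (((p:ℝ) - 1 + x0)/2) ∈ frameSupport m c p q :=
        hord.out hz hpF ⟨le_max_left _ _, max_le (by linarith) (by linarith)⟩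
      have hwb := (hFband hwF).2.2
      rw [seg1 _ (le_of_lt hw1) (by linarith)] at hwb
      have := mul_lt_mul_of_pos_right
        (show (c q - c p)/d1 < (p:ℝ) - max z (((p:ℝ) - 1 + x0)/2) by linarith) hd1pos
      linarith
    · have hw1 : min z (((q:ℝ) + 1 + y0)/2) < (q:ℝ) + 1 :=
        lt_of_le_of_lt (min_le_right _ _) (by linarith)
      have hw2 : y0 < min z (((q:ℝ) + 1 + y0)/2) := lt_min hzr (by linarith)
      have hwF : min z (((q:ℝ) + 1 + y0)/2) ∈ frameSupport m c p q :=
        hord.out hpF hz ⟨le_min (by linarith) (by linarith), min_le_left _ _⟩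
      have hwa := (hFband hwF).2.1
      rw [seg3 _ (by linarith) (le_of_lt hw1)] at hwa
      have := mul_lt_mul_of_pos_right
        (show (c q - c p)/d2 < min z (((q:ℝ) + 1 + y0)/2) - (q:ℝ) by linarith) hd2pos
      linarith
  refine ⟨?_, ?_, ?_⟩
  · exact hsub ⟨by linarith, le_of_lt hy0a⟩
  · intro u _ _ huF
    have h := hcomp huF
    have h1 : (p:ℝ) - 1 < (u:ℝ) := lt_of_lt_of_le hx0a h.1
    have h2 : (u:ℝ) < (q:ℝ) + 1 := lt_of_le_of_lt h.2 hy0b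
    have hu1 : p < u + 1 := by exact_mod_cast (by push_cast; linarith : (p:ℝ) < ((u+1:ℕ):ℝ))
    have hu2 : u < q + 1 := by exact_mod_cast (by push_cast; linarith : (u:ℝ) < ((q+1:ℕ):ℝ))
    omega
  · intro z hz
    have h := hcomp hz
    exact ⟨lt_of_lt_of_le hx0a h.1, lt_of_le_of_lt h.2 hy0b⟩
end
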